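/- Let θ₀ ∈ (0, π/2), β ∈ (0,1) and c > 0. Then there exists a constant C > 0, depending only on (θ₀, β, c), such that the following holds: for every function ψ : ℂ → ℝ that is continuous on the closed unit disc 𝔻̄ and satisfies the sub-mean value inequality ψ(z) ≤ (1/(2π)) ∫₀^{2π} ψ(z + r e^{it}) dt for every z ∈ 𝔻 and every r > 0 such that the closed ball of radius r about z is contained in 𝔻 (i.e. ψ is subharmonic on 𝔻), if ψ(e^{iθ}) ≤ c|θ|^β for all θ ∈ (−θ₀, θ₀) and ψ(e^{iθ}) ≤ c for all θ ∈ [−π, π], then ψ(z) ≤ C|1 − z|^β for every z ∈ 𝔻. -/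

import Mathlib

open Metric Real

lemma meanValueC {f : ℂ → ℂ} {z : ℂ} {r : ℝ} (hr : 0 < r)
    (hf : ∀ w ∈ closedBall z r, DifferentiableAt ℂ f w) :
    (∫ t in (0:ℝ)..(2*π), f (z + (r:ℂ) * Complex.exp (t * Complex.I)))
      = 2 * π * f z := by
  have hc : ContinuousOn f (closedBall z r) :=
    fun w hw => (hf w hw).continuousAt.continuousWithinAt
  have hd : ∀ w ∈ ball z r \ (∅ : Set ℂ), DifferentiableAt ℂ f w :=
    fun w hw => hf w (ball_subset_closedBall hw.1)
  have h := Complex.circleIntegral_sub_center_inv_smul_of_differentiable_on_off_countable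
    hr Set.countable_empty hc hd
  rw [circleIntegral] at h
  have hint : ∀ θ : ℝ, deriv (circleMap z r) θ •
      ((circleMap z r θ - z)⁻¹ • f (circleMap z r θ))
      = Complex.I * f (circleMap z r θ) := by
    intro θ
    rw [deriv_circleMap, circleMap_sub_center]
    have hne : circleMap 0 r θ ≠ 0 := by
      simpa using circleMap_ne_center (c := (0:ℂ)) hr.ne' (θ := θ)
    field_simp [smul_eq_mul]
    rw [smul_eq_mul, smul_eq_mul, one_div, ← mul_assoc, mul_assoc (circleMap 0 r θ),
      mul_comm Complex.I, ← mul_assoc, mul_inv_cancel₀ hne, one_mul]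
  simp only [hint] at h
  rw [intervalIntegral.integral_const_mul, smul_eq_mul] at h
  have h2 : (∫ t in (0:ℝ)..(2*π), f (circleMap z r t)) = 2 * π * f z := by
    have hI : (Complex.I : ℂ) ≠ 0 := Complex.I_ne_zero
    apply mul_left_cancel₀ hI
    rw [h]; ring
  simpa [circleMap] using h2

lemma circleContinuous (z : ℂ) (r : ℝ) :
    Continuous fun t : ℝ => z + (r:ℂ) * Complex.exp ((t:ℂ) * Complex.I) := by
  fun_prop

lemma circleMemClosedBall (z : ℂ) {r : ℝ} (hr : 0 < r) (t : ℝ) :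
    z + (r:ℂ) * Complex.exp ((t:ℂ) * Complex.I) ∈ closedBall z r := by
  simp [dist_eq_norm, Complex.norm_exp_ofReal_mul_I, abs_of_pos hr]

lemma meanValueRe {f : ℂ → ℂ} {z : ℂ} {r : ℝ} (hr : 0 < r)
    (hf : ∀ w ∈ closedBall z r, DifferentiableAt ℂ f w) :
    (∫ t in (0:ℝ)..(2*π), (f (z + (r:ℂ) * Complex.exp (t * Complex.I))).re)
      = 2 * π * (f z).re := by
  have hcont : Continuous fun t : ℝ => f (z + (r:ℂ) * Complex.exp ((t:ℂ) * Complex.I)) :=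
    continuous_iff_continuousAt.2 fun t =>
      ContinuousAt.comp (f := fun t : ℝ => z + (r:ℂ) * Complex.exp ((t:ℂ) * Complex.I))
        ((hf _ (circleMemClosedBall z hr t)).continuousAt)
        ((circleContinuous z r).continuousAt)
  have h := Complex.reCLM.intervalIntegral_comp_comm
    (hcont.intervalIntegrable (μ := MeasureTheory.volume) 0 (2*π))
  simp only [Complex.reCLM_apply] at h
  rw [h, meanValueC hr hf]
  simp

lemma normSq_integral (x : ℂ) (r : ℝ) :
    (∫ t in (0:ℝ)..(2*π), ‖x + (r:ℂ) * Complex.exp ((t:ℂ) * Complex.I)‖^2)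
      = 2 * π * (‖x‖^2 + r^2) := by
  have ii : ∀ {h : ℝ → ℝ}, Continuous h → IntervalIntegrable h MeasureTheory.volume 0 (2*π) :=
    fun hh => hh.intervalIntegrable _ _
  have key : ∀ t : ℝ, ‖x + (r:ℂ) * Complex.exp ((t:ℂ) * Complex.I)‖^2
      = (‖x‖^2 + r^2) + ((2*r*x.re) * Real.cos t + (2*r*x.im) * Real.sin t) := by
    intro t
    simp only [Complex.sq_norm, Complex.normSq_apply, Complex.add_re,
      Complex.add_im, Complex.mul_re, Complex.mul_im, Complex.exp_mul_I,
      Complex.ofReal_re, Complex.ofReal_im, Complex.cos_ofReal_re, Complex.sin_ofReal_re,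
      Complex.mul_I_re, Complex.mul_I_im, Complex.cos_ofReal_im, Complex.sin_ofReal_im,
      Complex.I_re, Complex.I_im]
    nlinarith [Real.sin_sq_add_cos_sq t]
  have h2 : (∫ t in (0:ℝ)..(2*π), ((2*r*x.re) * Real.cos t + (2*r*x.im) * Real.sin t)) = 0 := by
    rw [intervalIntegral.integral_add (ii (by fun_prop)) (ii (by fun_prop)),
      intervalIntegral.integral_const_mul, intervalIntegral.integral_const_mul,
      integral_cos, integral_sin]
    simp
  simp only [key]
  rw [intervalIntegral.integral_add (ii (by fun_prop)) (ii (by fun_prop)), h2,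
    intervalIntegral.integral_const]
  simp [smul_eq_mul]
  try ring

lemma maxPrinciple {φ : ℂ → ℝ} (hcont : ContinuousOn φ (closedBall (0:ℂ) 1))
    (hsub : ∀ z ∈ ball (0 : ℂ) 1, ∀ r : ℝ, 0 < r → closedBall z r ⊆ ball (0 : ℂ) 1 →
        φ z ≤ (1 / (2 * π)) * ∫ t in (0 : ℝ)..(2 * π),
          φ (z + (r : ℂ) * Complex.exp (t * Complex.I)))
    (hbd : ∀ w ∈ sphere (0:ℂ) 1, φ w ≤ 0) :
    ∀ z ∈ ball (0:ℂ) 1, φ z ≤ 0 := by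
  intro z hz
  refine le_of_forall_pos_le_add fun ε hε => ?_
  set g : ℂ → ℝ := fun w => φ w + ε * ‖w‖^2 with hg
  have hgc : ContinuousOn g (closedBall (0:ℂ) 1) := by
    apply hcont.add
    fun_prop
  obtain ⟨x, hxK, hmax⟩ := (isCompact_closedBall (0:ℂ) 1).exists_isMaxOn
    ⟨0, mem_closedBall_self zero_le_one⟩ hgc
  have hxle : ‖x‖ ≤ 1 := by simpa [dist_eq_norm] using hxK
  by_cases hx1 : ‖x‖ < 1
  · exfalso
    have hxball : x ∈ ball (0:ℂ) 1 := by simpa [dist_eq_norm] using hx1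
    set r : ℝ := (1 - ‖x‖)/2 with hrdef
    have hr : 0 < r := by simp only [hrdef]; linarith
    have hsubset : closedBall x r ⊆ ball (0:ℂ) 1 := by
      intro w hw
      simp only [mem_closedBall, dist_eq_norm] at hw
      simp only [mem_ball, dist_eq_norm, sub_zero]
      calc ‖w‖ = ‖w - x + x‖ := by ring_nf
        _ ≤ ‖w - x‖ + ‖x‖ := norm_add_le _ _
        _ ≤ r + ‖x‖ := by linarith
        _ < 1 := by simp only [hrdef]; linarith
    have h1 := hsub x hxball r hr hsubset
    have hmemC : ∀ t : ℝ, x + (r:ℂ) * Complex.exp ((t:ℂ) * Complex.I) ∈ closedBall (0:ℂ) 1 :=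
      fun t => ball_subset_closedBall (hsubset (circleMemClosedBall x hr t))
    have hφc : Continuous fun t : ℝ => φ (x + (r:ℂ) * Complex.exp ((t:ℂ) * Complex.I)) :=
      continuous_iff_continuousAt.2 fun t =>
        ContinuousAt.comp (f := fun t : ℝ => x + (r:ℂ) * Complex.exp ((t:ℂ) * Complex.I))
          (hcont.continuousAt (mem_nhds_iff.2 ⟨ball (0:ℂ) 1, ball_subset_closedBall,
            isOpen_ball, hsubset (circleMemClosedBall x hr t)⟩))
          ((circleContinuous x r).continuousAt)
    have hn2c : Continuous fun t : ℝ => ‖x + (r:ℂ) * Complex.exp ((t:ℂ) * Complex.I)‖^2 := by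
      fun_prop
    have hgcomp : ∀ t : ℝ, g (x + (r:ℂ) * Complex.exp ((t:ℂ) * Complex.I))
        = φ (x + (r:ℂ) * Complex.exp ((t:ℂ) * Complex.I))
          + ε * ‖x + (r:ℂ) * Complex.exp ((t:ℂ) * Complex.I)‖^2 := fun t => rfl
    have hgint : (∫ t in (0:ℝ)..(2*π), g (x + (r:ℂ) * Complex.exp ((t:ℂ) * Complex.I)))
        ≤ ∫ _t in (0:ℝ)..(2*π), g x := by
      apply intervalIntegral.integral_mono_on Real.two_pi_pos.le
      · simp only [hgcomp]
        exact (hφc.add (continuous_const.mul hn2c)).intervalIntegrable _ _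
      · exact intervalIntegrable_const
      · exact fun t _ => hmax (hmemC t)
    have hsplit : (∫ t in (0:ℝ)..(2*π), g (x + (r:ℂ) * Complex.exp ((t:ℂ) * Complex.I)))
        = (∫ t in (0:ℝ)..(2*π), φ (x + (r:ℂ) * Complex.exp ((t:ℂ) * Complex.I)))
          + ε * (2 * π * (‖x‖^2 + r^2)) := by
      simp only [hgcomp]
      rw [intervalIntegral.integral_add
        (g := fun t : ℝ => ε * ‖x + (r:ℂ) * Complex.exp ((t:ℂ) * Complex.I)‖^2)
        (hφc.intervalIntegrable _ _)
        ((continuous_const.mul hn2c).intervalIntegrable _ _),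
        intervalIntegral.integral_const_mul, normSq_integral]
    have hconst : (∫ _t in (0:ℝ)..(2*π), g x) = 2 * π * g x := by
      rw [intervalIntegral.integral_const]; simp [smul_eq_mul]; try ring
    have hφint : 2 * π * φ x ≤ ∫ t in (0:ℝ)..(2*π), φ (x + (r:ℂ) * Complex.exp ((t:ℂ) * Complex.I)) := by
      have h2π : (0:ℝ) < 2 * π := Real.two_pi_pos
      calc 2 * π * φ x ≤ 2 * π * ((1 / (2 * π)) * ∫ t in (0:ℝ)..(2*π),
            φ (x + (r:ℂ) * Complex.exp ((t:ℂ) * Complex.I))) := by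
            exact mul_le_mul_of_nonneg_left h1 h2π.le
        _ = _ := by rw [← mul_assoc, mul_one_div_cancel h2π.ne', one_mul]
    have hgx : g x = φ x + ε * ‖x‖^2 := rfl
    have h2π : (0:ℝ) < 2 * π := Real.two_pi_pos
    nlinarith [hgint, hsplit, hconst, hφint, mul_pos hε (mul_pos h2π (mul_pos hr hr))]
  · have hx : ‖x‖ = 1 := le_antisymm hxle (not_lt.1 hx1)
    have hφx : φ x ≤ 0 := hbd x (by simp [mem_sphere_iff_norm, hx])
    have h1 : φ z ≤ g z := by
      have : 0 ≤ ε * ‖z‖^2 := mul_nonneg hε.le (by positivity)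
      simp only [hg]; linarith
    have h2 : g z ≤ g x := hmax (ball_subset_closedBall hz)
    have h3 : g x = φ x + ε := by simp [hg, hx]
    linarith

lemma cpow_re_eq {β : ℝ} {ζ : ℂ} (hζ : ζ ≠ 0) :
    (ζ ^ (β:ℂ)).re = ‖ζ‖ ^ β * Real.cos (β * Complex.arg ζ) := by
  rw [Complex.cpow_def_of_ne_zero hζ, Complex.exp_re]
  simp only [Complex.mul_re, Complex.mul_im, Complex.log_re, Complex.log_im,
    Complex.ofReal_re, Complex.ofReal_im, mul_zero, sub_zero, zero_mul, add_zero]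
  rw [Real.rpow_def_of_pos (norm_pos_iff.mpr hζ)]
  ring_nf

lemma cpow_re_lower {β : ℝ} (hβ0 : 0 < β) (hβ1 : β < 1) {ζ : ℂ} (hre : 0 ≤ ζ.re) :
    Real.cos (β * (π/2)) * ‖ζ‖ ^ β ≤ (ζ ^ (β:ℂ)).re := by
  rcases eq_or_ne ζ 0 with rfl | hζ
  · simp [Complex.zero_cpow (by exact_mod_cast hβ0.ne' : (β:ℂ) ≠ 0),
      Real.zero_rpow hβ0.ne']
  · rw [cpow_re_eq hζ, mul_comm]
    apply mul_le_mul_of_nonneg_left _ (Real.rpow_nonneg (norm_nonneg _) β)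
    have harg : |Complex.arg ζ| ≤ π / 2 := Complex.abs_arg_le_pi_div_two_iff.2 hre
    have h1 : |β * Complex.arg ζ| ≤ β * (π / 2) := by
      rw [abs_mul, abs_of_pos hβ0]
      exact mul_le_mul_of_nonneg_left harg hβ0.le
    calc Real.cos (β * (π/2)) ≤ Real.cos |β * Complex.arg ζ| := by
          apply Real.cos_le_cos_of_nonneg_of_le_pi (abs_nonneg _) _ h1
          nlinarith [Real.pi_pos]
      _ = Real.cos (β * Complex.arg ζ) := Real.cos_abs _

lemma cpow_re_upper {β : ℝ} (hβ0 : 0 < β) {ζ : ℂ} :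
    (ζ ^ (β:ℂ)).re ≤ ‖ζ‖ ^ β := by
  rcases eq_or_ne ζ 0 with rfl | hζ
  · simp [Complex.zero_cpow (by exact_mod_cast hβ0.ne' : (β:ℂ) ≠ 0),
      Real.zero_rpow hβ0.ne']
  · calc (ζ ^ (β:ℂ)).re ≤ ‖ζ ^ (β:ℂ)‖ := Complex.re_le_norm _
      _ = ‖ζ‖ ^ β := by
          rw [Complex.norm_cpow_of_ne_zero hζ]
          simp

lemma re_pos_of_ball {w : ℂ} (hw : ‖w‖ < 1) : 0 < (1 - w).re := by
  simp only [Complex.sub_re, Complex.one_re]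
  have := (Complex.re_le_norm w).trans_lt hw
  linarith

lemma uDiff {β : ℝ} {w : ℂ} (hw : ‖w‖ < 1) :
    DifferentiableAt ℂ (fun x : ℂ => (1 - x) ^ (β:ℂ)) w := by
  apply DifferentiableAt.cpow (by fun_prop) (differentiableAt_const _)
  exact Or.inl (re_pos_of_ball hw)

lemma uCont {β : ℝ} (hβ0 : 0 < β) :
    ContinuousOn (fun x : ℂ => (1 - x) ^ (β:ℂ)) (closedBall (0:ℂ) 1) := by
  intro w hw
  have hw1 : ‖w‖ ≤ 1 := by simpa [dist_eq_norm] using hw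
  have hre : 0 ≤ (1 - w).re := by
    simp only [Complex.sub_re, Complex.one_re]
    have := (Complex.re_le_norm w).trans hw1
    linarith
  have hc : ContinuousAt (fun x : ℂ => x ^ (β:ℂ)) (1 - w) :=
    Complex.continuousAt_cpow_const_of_re_pos (Or.inl hre) (by simpa using hβ0)
  exact (ContinuousAt.comp (f := fun x : ℂ => 1 - x) hc
    ((continuous_const.sub continuous_id).continuousAt)).continuousWithinAt

lemma boundary_norm_lower {θ : ℝ} (hθ : |θ| ≤ π) :
    (2/π) * |θ| ≤ ‖1 - Complex.exp ((θ:ℂ) * Complex.I)‖ := by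
  have hsq : ‖1 - Complex.exp ((θ:ℂ) * Complex.I)‖^2 = 2 - 2 * Real.cos θ := by
    simp only [Complex.sq_norm, Complex.normSq_apply, Complex.sub_re,
      Complex.sub_im, Complex.one_re, Complex.one_im, Complex.exp_mul_I, Complex.add_re,
      Complex.add_im, Complex.mul_I_re, Complex.mul_I_im, Complex.cos_ofReal_re,
      Complex.sin_ofReal_re, Complex.cos_ofReal_im, Complex.sin_ofReal_im]
    nlinarith [Real.sin_sq_add_cos_sq θ]
  have hs : (2/π) * (|θ|/2) ≤ Real.sin (|θ|/2) :=
    Real.mul_le_sin (by positivity) (by linarith)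
  have hsin_sq : Real.sin (|θ|/2)^2 = 1/2 - Real.cos θ / 2 := by
    have h1 := Real.sin_sq_add_cos_sq (|θ|/2)
    have h2 : Real.cos (2 * (|θ|/2)) = 2 * Real.cos (|θ|/2)^2 - 1 := Real.cos_two_mul _
    have h3 : (2 : ℝ) * (|θ|/2) = |θ| := by ring
    rw [h3] at h2
    rw [Real.cos_abs] at h2
    nlinarith
  have hpi : (0:ℝ) < π := Real.pi_pos
  have hnn : (0:ℝ) ≤ ‖1 - Complex.exp ((θ:ℂ) * Complex.I)‖ := norm_nonneg _
  nlinarith [abs_nonneg θ, sq_nonneg (‖1 - Complex.exp ((θ:ℂ) * Complex.I)‖ - (2/π) * |θ|)]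

/-- A boundary Hölder bound propagates to the interior for
subharmonic functions on the unit disc: if `ψ` is continuous on the closed unit
disc, satisfies the sub-mean value inequality on the open disc, is bounded by
`c |θ|^β` on the boundary arc `θ ∈ (-θ₀, θ₀)` and by `c` on the whole boundary,
then `ψ z ≤ C |1 - z|^β` on the open disc, with `C` depending only on
`(θ₀, β, c)`. -/
theorem stmt_1 (θ₀ β c : ℝ) (hθ₀ : θ₀ ∈ Set.Ioo 0 (π / 2))
    (hβ : β ∈ Set.Ioo (0 : ℝ) 1) (hc : 0 < c) :
    ∃ C > 0, ∀ ψ : ℂ → ℝ,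
      ContinuousOn ψ (closedBall (0 : ℂ) 1) →
      (∀ z ∈ ball (0 : ℂ) 1, ∀ r : ℝ, 0 < r → closedBall z r ⊆ ball (0 : ℂ) 1 →
        ψ z ≤ (1 / (2 * π)) * ∫ t in (0 : ℝ)..(2 * π),
          ψ (z + (r : ℂ) * Complex.exp (t * Complex.I))) →
      (∀ θ ∈ Set.Ioo (-θ₀) θ₀, ψ (Complex.exp (θ * Complex.I)) ≤ c * |θ| ^ β) →
      (∀ θ ∈ Set.Icc (-π) π, ψ (Complex.exp (θ * Complex.I)) ≤ c) →
      ∀ z ∈ ball (0 : ℂ) 1, ψ z ≤ C * ‖1 - z‖ ^ β := by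
  obtain ⟨hθ₀0, hθ₀π⟩ := hθ₀
  obtain ⟨hβ0, hβ1⟩ := hβ
  have hπ : (0:ℝ) < π := Real.pi_pos
  set k : ℝ := Real.cos (β * (π/2)) with hkdef
  have hk : 0 < k := Real.cos_pos_of_mem_Ioo ⟨by nlinarith, by nlinarith⟩
  set A : ℝ := c * (π/2) ^ β with hAdef
  set B : ℝ := c / ((2/π * θ₀) ^ β) with hBdef
  have hbase : (0:ℝ) < 2/π * θ₀ := by positivity
  have hA : 0 < A := by
    have : (0:ℝ) < (π/2) ^ β := Real.rpow_pos_of_pos (by positivity) β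
    positivity
  have hB : 0 < B := by
    have : (0:ℝ) < (2/π * θ₀) ^ β := Real.rpow_pos_of_pos hbase β
    positivity
  set M : ℝ := (A + B) / k with hMdef
  have hM : 0 < M := by positivity
  refine ⟨M, hM, ?_⟩
  intro ψ hψc hψsub hψarc hψbd z hz
  set u : ℂ → ℝ := fun w => ((1 - w) ^ (β:ℂ)).re with hudef
  have hre_nonneg : ∀ w : ℂ, ‖w‖ ≤ 1 → 0 ≤ (1 - w).re := by
    intro w hw
    simp only [Complex.sub_re, Complex.one_re]
    have := (Complex.re_le_norm w).trans hw
    linarith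
  have hu_low : ∀ w : ℂ, ‖w‖ ≤ 1 → k * ‖1 - w‖ ^ β ≤ u w :=
    fun w hw => cpow_re_lower hβ0 hβ1 (hre_nonneg w hw)
  have hu_up : ∀ w : ℂ, u w ≤ ‖1 - w‖ ^ β := fun w => cpow_re_upper hβ0
  have hu_nonneg : ∀ w : ℂ, ‖w‖ ≤ 1 → 0 ≤ u w := by
    intro w hw
    have := hu_low w hw
    have h2 : 0 ≤ ‖1 - w‖ ^ β := Real.rpow_nonneg (norm_nonneg _) β
    nlinarith
  -- boundary estimate
  have hbd : ∀ w ∈ sphere (0:ℂ) 1, ψ w - M * u w ≤ 0 := by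
    intro w hw
    have hw1 : ‖w‖ = 1 := by simpa [mem_sphere_iff_norm] using hw
    set θ : ℝ := Complex.arg w with hθdef
    have hwθ : Complex.exp ((θ:ℂ) * Complex.I) = w := by
      have := Complex.norm_mul_exp_arg_mul_I w
      rwa [show ((‖w‖ : ℝ) : ℂ) = 1 by simp [hw1],
        one_mul] at this
    have hθπ : |θ| ≤ π := Complex.abs_arg_le_pi w
    have hlow : (2/π) * |θ| ≤ ‖1 - w‖ := by
      have := boundary_norm_lower hθπ
      rwa [hwθ] at this
    have hulow : k * ((2/π) * |θ|) ^ β ≤ u w := by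
      calc k * ((2/π) * |θ|) ^ β ≤ k * ‖1 - w‖ ^ β := by
            apply mul_le_mul_of_nonneg_left _ hk.le
            exact Real.rpow_le_rpow (by positivity) hlow hβ0.le
        _ ≤ u w := hu_low w hw1.le
    by_cases hcase : |θ| < θ₀
    · have hψw : ψ w ≤ c * |θ| ^ β := by
        have := hψarc θ ⟨(abs_lt.1 hcase).1, (abs_lt.1 hcase).2⟩
        rwa [hwθ] at this
      have key : c * |θ| ^ β ≤ M * u w := by
        have h1 : M * (k * ((2/π) * |θ|) ^ β) ≤ M * u w :=
          mul_le_mul_of_nonneg_left hulow hM.le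
        have h2 : M * (k * ((2/π) * |θ|) ^ β) = (A + B) * ((2/π) * |θ|) ^ β := by
          rw [hMdef]; field_simp
        have h3 : ((2/π) * |θ|) ^ β = (2/π) ^ β * |θ| ^ β :=
          Real.mul_rpow (by positivity) (abs_nonneg θ)
        have h4 : A * ((2/π) ^ β * |θ| ^ β) = c * |θ| ^ β := by
          rw [hAdef]
          have : (π/2 : ℝ) ^ β * (2/π) ^ β = 1 := by
            rw [← Real.mul_rpow (by positivity) (by positivity)]
            rw [show (π/2 : ℝ) * (2/π) = 1 by field_simp]
            exact Real.one_rpow β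
          linear_combination (c * |θ| ^ β) * this
        have h5 : 0 ≤ B * ((2/π) ^ β * |θ| ^ β) := by
          have : (0:ℝ) ≤ (2/π) ^ β := Real.rpow_nonneg (by positivity) β
          have h6 : (0:ℝ) ≤ |θ| ^ β := Real.rpow_nonneg (abs_nonneg θ) β
          positivity
        nlinarith [h1, h2, h3, h4, h5]
      linarith
    · have hψw : ψ w ≤ c := by
        have := hψbd θ ⟨by linarith [(abs_le.1 hθπ).1], (abs_le.1 hθπ).2⟩
        rwa [hwθ] at this
      have key : c ≤ M * u w := by
        have hmono : ((2/π) * θ₀) ^ β ≤ ((2/π) * |θ|) ^ β := by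
          apply Real.rpow_le_rpow hbase.le _ hβ0.le
          have := not_lt.1 hcase
          have h2π : (0:ℝ) < 2/π := by positivity
          nlinarith
        have h1 : M * (k * ((2/π) * θ₀) ^ β) ≤ M * u w := by
          apply mul_le_mul_of_nonneg_left _ hM.le
          calc k * ((2/π) * θ₀) ^ β ≤ k * ((2/π) * |θ|) ^ β :=
                mul_le_mul_of_nonneg_left hmono hk.le
            _ ≤ u w := hulow
        have h2 : M * (k * ((2/π) * θ₀) ^ β) = (A + B) * ((2/π) * θ₀) ^ β := by
          rw [hMdef]; field_simp
        have hpow : (0:ℝ) < ((2/π) * θ₀) ^ β := Real.rpow_pos_of_pos hbase β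
        have h3 : B * ((2/π) * θ₀) ^ β = c := by
          rw [hBdef]; field_simp
        nlinarith [h1, h2, h3, mul_pos hA hpow]
      linarith
  -- subharmonicity of the difference
  set φ : ℂ → ℝ := fun w => ψ w - M * u w with hφdef
  have huc : ContinuousOn u (closedBall (0:ℂ) 1) :=
    Complex.continuous_re.comp_continuousOn (uCont hβ0)
  have hφc : ContinuousOn φ (closedBall (0:ℂ) 1) :=
    hψc.sub (continuousOn_const.mul huc)
  have hφsub : ∀ z ∈ ball (0 : ℂ) 1, ∀ r : ℝ, 0 < r → closedBall z r ⊆ ball (0 : ℂ) 1 →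
      φ z ≤ (1 / (2 * π)) * ∫ t in (0 : ℝ)..(2 * π),
        φ (z + (r : ℂ) * Complex.exp (t * Complex.I)) := by
    intro x hx r hr hsubset
    have hdiff : ∀ w ∈ closedBall x r, DifferentiableAt ℂ (fun y : ℂ => (1 - y) ^ (β:ℂ)) w := by
      intro w hw
      have : w ∈ ball (0:ℂ) 1 := hsubset hw
      exact uDiff (by simpa [dist_eq_norm] using this)
    have hmean := meanValueRe (f := fun y : ℂ => (1 - y) ^ (β:ℂ)) hr hdiff
    have hψcirc : Continuous fun t : ℝ => ψ (x + (r:ℂ) * Complex.exp ((t:ℂ) * Complex.I)) :=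
      continuous_iff_continuousAt.2 fun t =>
        ContinuousAt.comp (f := fun t : ℝ => x + (r:ℂ) * Complex.exp ((t:ℂ) * Complex.I))
          (hψc.continuousAt (mem_nhds_iff.2 ⟨ball (0:ℂ) 1, ball_subset_closedBall,
            isOpen_ball, hsubset (circleMemClosedBall x hr t)⟩))
          ((circleContinuous x r).continuousAt)
    have hucirc : Continuous fun t : ℝ => u (x + (r:ℂ) * Complex.exp ((t:ℂ) * Complex.I)) :=
      continuous_iff_continuousAt.2 fun t =>
        ContinuousAt.comp (f := fun t : ℝ => x + (r:ℂ) * Complex.exp ((t:ℂ) * Complex.I))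
          (Complex.continuous_re.continuousAt.comp
            ((hdiff _ (circleMemClosedBall x hr t)).continuousAt))
          ((circleContinuous x r).continuousAt)
    have hsplit : (∫ t in (0:ℝ)..(2*π), φ (x + (r:ℂ) * Complex.exp ((t:ℂ) * Complex.I)))
        = (∫ t in (0:ℝ)..(2*π), ψ (x + (r:ℂ) * Complex.exp ((t:ℂ) * Complex.I)))
          - M * (2 * π * u x) := by
      rw [show (fun t : ℝ => φ (x + (r:ℂ) * Complex.exp ((t:ℂ) * Complex.I)))
          = fun t : ℝ => ψ (x + (r:ℂ) * Complex.exp ((t:ℂ) * Complex.I))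
            - M * u (x + (r:ℂ) * Complex.exp ((t:ℂ) * Complex.I)) from rfl,
        intervalIntegral.integral_sub
          (g := fun t : ℝ => M * u (x + (r:ℂ) * Complex.exp ((t:ℂ) * Complex.I)))
          (hψcirc.intervalIntegrable _ _)
          ((continuous_const.mul hucirc).intervalIntegrable _ _),
        intervalIntegral.integral_const_mul]
      congr 1
      rw [show (∫ t in (0:ℝ)..(2*π), u (x + (r:ℂ) * Complex.exp ((t:ℂ) * Complex.I)))
        = 2 * π * u x from hmean]
    have h1 := hψsub x hx r hr hsubset
    have h2π : (0:ℝ) < 2 * π := Real.two_pi_pos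
    rw [hsplit]
    have : (1 / (2 * π)) * ((∫ t in (0:ℝ)..(2*π),
          ψ (x + (r:ℂ) * Complex.exp ((t:ℂ) * Complex.I))) - M * (2 * π * u x))
        = (1 / (2 * π)) * (∫ t in (0:ℝ)..(2*π),
          ψ (x + (r:ℂ) * Complex.exp ((t:ℂ) * Complex.I))) - M * u x := by
      generalize (∫ t in (0:ℝ)..(2*π), ψ (x + (r:ℂ) * Complex.exp ((t:ℂ) * Complex.I))) = J
      field_simp
    rw [this]
    have : φ x = ψ x - M * u x := rfl
    rw [this]
    linarith
  have hfinal := maxPrinciple hφc hφsub hbd z hz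
  have hz1 : ‖z‖ ≤ 1 := by
    have : z ∈ closedBall (0:ℂ) 1 := ball_subset_closedBall hz
    simpa [dist_eq_norm] using this
  have : ψ z ≤ M * u z := by
    have : φ z = ψ z - M * u z := rfl
    linarith [hfinal]
  calc ψ z ≤ M * u z := this
    _ ≤ M * ‖1 - z‖ ^ β := mul_le_mul_of_nonneg_left (hu_up z) hM.le
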